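/- For positive coprime integers $a_1 < \cdots < a_k < n$ and the weight choice $\boldsymbol{\ell} = (a_1,\ldots,a_k)$, the diameter of the weighted directed circulant graph satisfies $\operatorname{diam} C_n^+((a_1,\ldots,a_k), \mathbf{a}) = n + F(a_1,\ldots,a_k,n)$, where $F$ denotes the Frobenius number of $a_1,\ldots,a_k,n$. -/

import Mathlib

/-- For positive coprime integers `a_1 < ⋯ < a_k < n` and weights `ℓ = (a_1,…,a_k)`, the
diameter of the weighted directed circulant graph satisfies
`diam C_n⁺((a_1,…,a_k), a) = n + F(a_1,…,a_k,n)`, where `F` is the Frobenius number.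
The distance from `i` to `j` is the least total length `N = ∑ x_h a_h` of a directed path,
i.e. the least `N` representable as a nonnegative combination of the `a_h` with
`N ≡ j - i (mod n)`; the diameter is the largest such distance. -/
theorem diam_weighted_circulant_digraph_eq_frobenius
    (k n : ℕ) (hn : 0 < n) (a : Fin k → ℕ)
    (hmono : StrictMono a) (hpos : ∀ h, 0 < a h) (hlt : ∀ h, a h < n)
    (hgcd : Nat.gcd (Finset.univ.gcd a) n = 1)
    (F : ℕ) (hF : FrobeniusNumber F (Set.range a ∪ {n})) :
    sSup {d : ℕ | ∃ i j : ZMod n,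
        d = sInf {N : ℕ | (N : ZMod n) = j - i ∧
            ∃ x : Fin k → ℕ, N = ∑ h, x h * a h}}
      = n + F := by
  haveI : NeZero n := ⟨hn.ne'⟩
  set S : Set ℕ := Set.range a ∪ {n} with hS
  -- closure characterization
  have hclos : ∀ N : ℕ, N ∈ AddSubmonoid.closure S ↔
      ∃ x : Fin k → ℕ, ∃ t : ℕ, N = (∑ h, x h * a h) + t * n := by
    intro N
    constructor
    · intro h
      induction h using AddSubmonoid.closure_induction with
      | mem s hs =>
        rcases hs with ⟨h, rfl⟩ | hs
        · exact ⟨fun h' => if h' = h then 1 else 0, 0, by simp [Finset.sum_ite_eq']⟩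
        · refine ⟨0, 1, ?_⟩
          simp only [Set.mem_singleton_iff] at hs
          simp [hs]
      | zero => exact ⟨0, 0, by simp⟩
      | add x y hx hy ihx ihy =>
        obtain ⟨x1, t1, h1⟩ := ihx
        obtain ⟨x2, t2, h2⟩ := ihy
        exact ⟨x1 + x2, t1 + t2, by
          simp only [h1, h2, Pi.add_apply, add_mul, Finset.sum_add_distrib]; ring⟩
    · rintro ⟨x, t, rfl⟩
      apply AddSubmonoid.add_mem
      · apply AddSubmonoid.sum_mem
        intro i _
        have hmem : a i ∈ AddSubmonoid.closure S :=
          AddSubmonoid.subset_closure (Or.inl ⟨i, rfl⟩)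
        simpa [nsmul_eq_mul] using AddSubmonoid.nsmul_mem _ hmem (x i)
      · have hmem : n ∈ AddSubmonoid.closure S :=
          AddSubmonoid.subset_closure (Or.inr rfl)
        simpa [nsmul_eq_mul] using AddSubmonoid.nsmul_mem _ hmem t
  -- key: every residue class contains a representable number ≤ n + F
  have key : ∀ c : ZMod n, ∃ M : ℕ, ((M : ZMod n) = c ∧
      ∃ x : Fin k → ℕ, M = ∑ h, x h * a h) ∧ M ≤ n + F := by
    intro c
    set v : ℕ := (c - ((F : ZMod n) + 1)).val with hv
    have hvlt : v < n := ZMod.val_lt _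
    set N : ℕ := F + 1 + v with hN
    have hNc : (N : ZMod n) = c := by
      have hvc : ((v : ℕ) : ZMod n) = c - ((F : ZMod n) + 1) := by
        rw [hv, ZMod.natCast_val, ZMod.cast_id]
      push_cast [hN]
      rw [hvc]; ring
    have hNgt : F < N := by omega
    have hNmem : N ∈ AddSubmonoid.closure S := by
      by_contra h
      exact absurd (hF.2 h) (not_le.mpr hNgt)
    obtain ⟨x, t, hxt⟩ := (hclos N).mp hNmem
    refine ⟨∑ h, x h * a h, ⟨?_, x, rfl⟩, by omega⟩
    have : ((∑ h, x h * a h : ℕ) : ZMod n) = (N : ZMod n) := by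
      rw [hxt]; push_cast [ZMod.natCast_self]; ring
    rw [this, hNc]
  -- upper bound
  have upper : ∀ i j : ZMod n, sInf {N : ℕ | (N : ZMod n) = j - i ∧
      ∃ x : Fin k → ℕ, N = ∑ h, x h * a h} ≤ n + F := by
    intro i j
    obtain ⟨M, hM, hMle⟩ := key (j - i)
    exact le_trans (Nat.sInf_le hM) hMle
  -- lower bound : the class of F has sInf = n + F
  have lower : sInf {N : ℕ | (N : ZMod n) = (F : ZMod n) - 0 ∧
      ∃ x : Fin k → ℕ, N = ∑ h, x h * a h} = n + F := by
    have hbig : ∀ M ∈ {N : ℕ | (N : ZMod n) = (F : ZMod n) - 0 ∧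
        ∃ x : Fin k → ℕ, N = ∑ h, x h * a h}, n + F ≤ M := by
      rintro M ⟨hMc, x, hMx⟩
      rw [sub_zero] at hMc
      have hmod : M ≡ F [MOD n] := (ZMod.natCast_eq_natCast_iff _ _ _).mp hMc
      by_contra hlt'
      push_neg at hlt'
      rcases le_or_gt M F with hMF | hFM
      · -- F would be in the closure
        have hdvd : n ∣ F - M := (Nat.modEq_iff_dvd' hMF).mp hmod
        obtain ⟨s, hs⟩ := hdvd
        have : F ∈ AddSubmonoid.closure S :=
          (hclos F).mpr ⟨x, s, by rw [← hMx, Nat.mul_comm s n, ← hs]; omega⟩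
        exact hF.1 this
      · have hdvd : n ∣ M - F := (Nat.modEq_iff_dvd' hFM.le).mp hmod.symm
        have := Nat.le_of_dvd (by omega) hdvd
        omega
    obtain ⟨M, hM, hMle⟩ := key ((F : ZMod n) - 0)
    have hne : {N : ℕ | (N : ZMod n) = (F : ZMod n) - 0 ∧
        ∃ x : Fin k → ℕ, N = ∑ h, x h * a h}.Nonempty := ⟨M, hM⟩
    have h1 := hbig _ (Nat.sInf_mem hne)
    have h2 : sInf {N : ℕ | (N : ZMod n) = (F : ZMod n) - 0 ∧
        ∃ x : Fin k → ℕ, N = ∑ h, x h * a h} ≤ n + F :=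
      le_trans (Nat.sInf_le hM) hMle
    exact le_antisymm h2 h1
  have hmem : (n + F) ∈ {d : ℕ | ∃ i j : ZMod n,
      d = sInf {N : ℕ | (N : ZMod n) = j - i ∧
          ∃ x : Fin k → ℕ, N = ∑ h, x h * a h}} := by
    refine ⟨0, (F : ZMod n), ?_⟩
    exact lower.symm
  apply le_antisymm
  · apply csSup_le ⟨n + F, hmem⟩
    rintro d ⟨i, j, rfl⟩
    exact upper i j
  · exact le_csSup ⟨n + F, by rintro d ⟨i, j, rfl⟩; exact upper i j⟩ hmem
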